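/- arXiv:1708.01678 — 3 statements merged into one kernel-verified Lean document; each statement's English description precedes it below -/
import Mathlib

section
/- Let $\mu$ be a finite measure on $(0,\infty)$ and let $g : (0,\infty) \to \mathbb{R}$ be measurable with $\int_0^\infty e^{-t x_0} |g(t)|\,\mu(dt) < \infty$ for some $x_0 > 0$. Suppose there exists $p > 0$ such that $g(t) \le 0$ for $t \le p$ and $g(t) \ge 0$ for $t \ge p$. Then for all $x \ge x_0$ and all $b \le x$ with $b \ge x_0$, $\int_0^\infty e^{-tx} g(t)\,\mu(dt) \le e^{-(x-b)p} \int_0^\infty e^{-tb} g(t)\,\mu(dt)$. -/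
open Set MeasureTheory Real

theorem stmt_1 (μ : Measure ℝ) [IsFiniteMeasure μ] (hsupp : μ (Iic 0) = 0)
    (g : ℝ → ℝ) (hg : Measurable g) (x0 : ℝ) (hx0 : 0 < x0)
    (hint : Integrable (fun t => Real.exp (-t * x0) * |g t|) μ)
    (p : ℝ) (hp : 0 < p)
    (hneg : ∀ t, 0 < t → t ≤ p → g t ≤ 0)
    (hpos : ∀ t, p ≤ t → 0 ≤ g t) :
    ∀ x, x0 ≤ x → ∀ b, x0 ≤ b → b ≤ x →
      ∫ t, Real.exp (-t * x) * g t ∂μ ≤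
        Real.exp (-(x - b) * p) * ∫ t, Real.exp (-t * b) * g t ∂μ := by
  intro x hx b hb hbx
  have hae : ∀ᵐ t ∂μ, 0 < t := by
    rw [ae_iff]
    convert hsupp using 2
    ext t
    simp [not_lt]
  have key : ∀ c : ℝ, x0 ≤ c → Integrable (fun t => Real.exp (-t * c) * g t) μ := by
    intro c hc
    refine hint.mono (((measurable_id.neg.mul_const c).exp.mul hg).aestronglyMeasurable) ?_
    filter_upwards [hae] with t ht
    simp only [norm_mul, Real.norm_eq_abs, abs_abs, Real.abs_exp]
    exact mul_le_mul_of_nonneg_right (Real.exp_le_exp.2 (by nlinarith)) (abs_nonneg _)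
  rw [← integral_const_mul]
  refine integral_mono_ae (key x hx) ((key b hb).const_mul _) ?_
  filter_upwards [hae] with t ht
  have hrw : Real.exp (-t * x) * g t
      = Real.exp (-(x - b) * t) * (Real.exp (-t * b) * g t) := by
    rw [← mul_assoc, ← Real.exp_add]; ring_nf
  rw [hrw]
  rcases le_total t p with htp | hpt
  · have hg0 : Real.exp (-t * b) * g t ≤ 0 :=
      mul_nonpos_of_nonneg_of_nonpos (Real.exp_pos _).le (hneg t ht htp)
    apply mul_le_mul_of_nonpos_right _ hg0
    exact Real.exp_le_exp.2 (by nlinarith)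
  · have hg0 : 0 ≤ Real.exp (-t * b) * g t :=
      mul_nonneg (Real.exp_pos _).le (hpos t hpt)
    apply mul_le_mul_of_nonneg_right _ hg0
    exact Real.exp_le_exp.2 (by nlinarith)
end

section
/- Let $\Phi > 0$, $r > 0$, and let $W'' : (0,\infty) \to \mathbb{R}$ be continuous with $e^{-\Phi y}|W''(y)|$ integrable. Suppose there exists $\bar{b} \ge 0$ with $W'' < 0$ on $(0,\bar b)$ and $W'' > 0$ on $(\bar b, \infty)$. Define $h(b) := -r\int_b^\infty e^{-\Phi y}W''(y)\,dy$. Then: (i) $h$ is decreasing on $(0,\bar b)$ and increasing on $(\bar b,\infty)$ with $h(b) \to 0$ as $b \to \infty$ and $h(\bar b) < 0$ (assuming $\bar b$ is such that $W''$ is not a.e. zero on $(\bar b,\infty)$); (ii) if $\lim_{b\downarrow 0} h(b) > 0$ then there is a unique $b^* \in (0,\bar b)$ with $h(b^*) = 0$ and $h(b) \ge 0$ iff $b \in (0,b^*]$; (iii) if $\lim_{b \downarrow 0} h(b) \le 0$ then $h(b) \le 0$ for all $b > 0$. -/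
open Set MeasureTheory Filter

theorem stmt_7 (Φ r : ℝ) (hΦ : 0 < Φ) (hr : 0 < r)
    (W'' : ℝ → ℝ) (hW''c : ContinuousOn W'' (Ioi 0))
    (hint : IntegrableOn (fun y => Real.exp (-Φ * y) * |W'' y|) (Ioi 0))
    (bbar : ℝ) (hbbar : 0 ≤ bbar)
    (hneg : ∀ y, 0 < y → y < bbar → W'' y < 0)
    (hpos : ∀ y, bbar < y → 0 < W'' y) :
    (StrictAntiOn (fun b => -r * ∫ y in Ioi b, Real.exp (-Φ * y) * W'' y) (Ioo 0 bbar) ∧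
     StrictMonoOn (fun b => -r * ∫ y in Ioi b, Real.exp (-Φ * y) * W'' y) (Ici bbar) ∧
     Tendsto (fun b => -r * ∫ y in Ioi b, Real.exp (-Φ * y) * W'' y) atTop (nhds 0) ∧
     -r * ∫ y in Ioi bbar, Real.exp (-Φ * y) * W'' y < 0) ∧
    (0 < -r * ∫ y in Ioi (0:ℝ), Real.exp (-Φ * y) * W'' y →
      ∃ bs, bs ∈ Ioo 0 bbar ∧ (-r * ∫ y in Ioi bs, Real.exp (-Φ * y) * W'' y) = 0 ∧
        (∀ b ∈ Ioo (0:ℝ) bbar, (-r * ∫ y in Ioi b, Real.exp (-Φ * y) * W'' y) = 0 → b = bs) ∧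
        (∀ b > (0:ℝ), (0 ≤ -r * ∫ y in Ioi b, Real.exp (-Φ * y) * W'' y) ↔ b ≤ bs)) ∧
    (-r * ∫ y in Ioi (0:ℝ), Real.exp (-Φ * y) * W'' y ≤ 0 →
      ∀ b > (0:ℝ), -r * ∫ y in Ioi b, Real.exp (-Φ * y) * W'' y ≤ 0) := by
  set f : ℝ → ℝ := fun y => Real.exp (-Φ * y) * W'' y with hf_def
  set H : ℝ → ℝ := fun b => -r * ∫ y in Ioi b, f y with hH_def
  -- continuity of f on Ioi 0
  have hfc : ContinuousOn f (Ioi 0) :=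
    (Real.continuous_exp.comp (continuous_const.mul continuous_id)).continuousOn.mul hW''c
  -- integrability of f on Ioi 0
  have hf_int : IntegrableOn f (Ioi 0) := by
    refine Integrable.mono' hint (hfc.aestronglyMeasurable measurableSet_Ioi) ?_
    filter_upwards with y
    simp [hf_def, abs_mul, abs_of_pos (Real.exp_pos _), le_refl]
  have hf_int' : ∀ b : ℝ, 0 ≤ b → IntegrableOn f (Ioi b) := fun b hb =>
    hf_int.mono_set (Ioi_subset_Ioi hb)
  have hf_intIoc : ∀ a b : ℝ, 0 ≤ a → IntegrableOn f (Ioc a b) := fun a b ha =>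
    hf_int.mono_set (fun y hy => lt_of_le_of_lt ha hy.1)
  -- splitting
  have hsplit : ∀ a b : ℝ, 0 ≤ a → a ≤ b →
      ∫ y in Ioi a, f y = (∫ y in Ioc a b, f y) + ∫ y in Ioi b, f y := by
    intro a b ha hab
    rw [← setIntegral_union (Ioc_disjoint_Ioi le_rfl) measurableSet_Ioi
      (hf_intIoc a b ha) (hf_int' b (ha.trans hab)), Ioc_union_Ioi_eq_Ioi hab]
  -- strict sign of Ioc integrals
  have hIoc_neg : ∀ a b : ℝ, 0 ≤ a → a < b → b ≤ bbar → (∫ y in Ioc a b, f y) < 0 := by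
    intro a b ha hab hbb
    have hii : IntervalIntegrable f volume a b := by
      rw [intervalIntegrable_iff_integrableOn_Ioc_of_le hab.le]
      exact hf_intIoc a b ha
    have := intervalIntegral.intervalIntegral_pos_of_pos_on hii.neg (f := fun y => -f y)
      (fun x hx => by
        have hx0 : 0 < x := lt_of_le_of_lt ha hx.1
        have := hneg x hx0 (lt_of_lt_of_le hx.2 hbb)
        simp only [neg_pos]
        exact mul_neg_of_pos_of_neg (Real.exp_pos _) this) hab
    rw [intervalIntegral.integral_neg, intervalIntegral.integral_of_le hab.le] at this
    linarith
  have hIoc_pos : ∀ a b : ℝ, bbar ≤ a → a < b → 0 < ∫ y in Ioc a b, f y := by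
    intro a b ha hab
    have hii : IntervalIntegrable f volume a b := by
      rw [intervalIntegrable_iff_integrableOn_Ioc_of_le hab.le]
      exact hf_intIoc a b (hbbar.trans ha)
    have := intervalIntegral.intervalIntegral_pos_of_pos_on hii
      (fun x hx => mul_pos (Real.exp_pos _) (hpos x (lt_of_le_of_lt ha hx.1))) hab
    rwa [intervalIntegral.integral_of_le hab.le] at this
  -- positive tail
  have hIoi_pos : ∀ c : ℝ, bbar ≤ c → 0 < ∫ y in Ioi c, f y := by
    intro c hc
    rw [hsplit c (c + 1) (hbbar.trans hc) (by linarith)]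
    have h1 : 0 < ∫ y in Ioc c (c + 1), f y := hIoc_pos c (c + 1) hc (by linarith)
    have h2 : 0 ≤ ∫ y in Ioi (c + 1), f y := by
      refine setIntegral_nonneg measurableSet_Ioi fun y hy => ?_
      exact le_of_lt (mul_pos (Real.exp_pos _) (hpos y (by simp only [mem_Ioi] at hy; linarith)))
    linarith
  have hHneg : ∀ c : ℝ, bbar ≤ c → H c < 0 := by
    intro c hc
    have := hIoi_pos c hc
    simp only [hH_def]
    nlinarith
  -- strict antitone / monotone
  have hanti : StrictAntiOn H (Ioo 0 bbar) := by
    intro a ha b hb hab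
    have hs := hsplit a b ha.1.le hab.le
    have hn := hIoc_neg a b ha.1.le hab hb.2.le
    simp only [hH_def]
    rw [hs]
    nlinarith
  have hmono : StrictMonoOn H (Ici bbar) := by
    intro a ha b hb hab
    have hs := hsplit a b (hbbar.trans ha) hab.le
    have hp := hIoc_pos a b ha hab
    simp only [hH_def]
    rw [hs]
    nlinarith
  -- tendsto
  have htend : Tendsto H atTop (nhds 0) := by
    have h1 : Tendsto (fun b => ∫ y in (0:ℝ)..b, f y) atTop
        (nhds (∫ y in Ioi (0:ℝ), f y)) :=
      intervalIntegral_tendsto_integral_Ioi 0 hf_int tendsto_id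
    have h2 : Tendsto (fun b => -r * ((∫ y in Ioi (0:ℝ), f y) - ∫ y in (0:ℝ)..b, f y))
        atTop (nhds (-r * ((∫ y in Ioi (0:ℝ), f y) - ∫ y in Ioi (0:ℝ), f y))) :=
      (tendsto_const_nhds.sub h1).const_mul _
    simp only [sub_self, mul_zero] at h2
    refine h2.congr' ?_
    filter_upwards [eventually_ge_atTop (0:ℝ)] with b hb
    rw [intervalIntegral.integral_of_le hb, hsplit 0 b le_rfl hb]
    ring
  -- continuity of H on Icc 0 bbar
  have hf_intIcc : IntegrableOn f (Icc 0 bbar) := by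
    rw [integrableOn_Icc_iff_integrableOn_Ioc]
    exact hf_intIoc 0 bbar le_rfl
  have hHcont : ContinuousOn H (Icc 0 bbar) := by
    have hG := intervalIntegral.continuousOn_primitive hf_intIcc
    have : ContinuousOn (fun x => -r * ((∫ y in Ioi (0:ℝ), f y) - ∫ t in Ioc 0 x, f t))
        (Icc 0 bbar) := (continuousOn_const.sub hG).const_smul (-r)
    refine ContinuousOn.congr this fun x hx => ?_
    simp only [hH_def]
    rw [hsplit 0 x le_rfl hx.1]
    ring
  refine ⟨⟨hanti, hmono, htend, hHneg bbar le_rfl⟩, ?_, ?_⟩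
  · -- case (ii)
    intro h0
    have hbbar' : 0 < bbar := by
      rcases lt_or_eq_of_le hbbar with h | h
      · exact h
      · exfalso
        have h0' : (0:ℝ) < H 0 := h0
        have := hHneg 0 h.ge
        linarith
    have h0' : H 0 = -r * ∫ y in Ioi (0:ℝ), f y := rfl
    have hmem : (0:ℝ) ∈ Icc (H bbar) (H 0) := ⟨(hHneg bbar le_rfl).le, le_of_lt h0⟩
    obtain ⟨bs, hbs, hbs0⟩ := intermediate_value_Icc' hbbar hHcont hmem
    have hbsne0 : bs ≠ 0 := by
      rintro rfl
      have h0' : (0:ℝ) < H 0 := h0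
      rw [hbs0] at h0'
      exact lt_irrefl _ h0'
    have hbsnebb : bs ≠ bbar := by
      rintro rfl; exact absurd hbs0 (ne_of_lt (hHneg bs le_rfl))
    have hbsIoo : bs ∈ Ioo 0 bbar :=
      ⟨lt_of_le_of_ne hbs.1 (Ne.symm hbsne0), lt_of_le_of_ne hbs.2 hbsnebb⟩
    refine ⟨bs, hbsIoo, hbs0, ?_, ?_⟩
    · intro b hb hb0
      refine hanti.injOn hb hbsIoo ?_
      show H b = H bs
      rw [show H b = 0 from hb0, hbs0]
    · intro b hb
      constructor
      · intro hHb
        by_contra hlt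
        push_neg at hlt
        rcases le_or_gt bbar b with hbb | hbb
        · exact absurd hHb (not_le.mpr (hHneg b hbb))
        · have := hanti hbsIoo ⟨hb, hbb⟩ hlt
          rw [hbs0] at this
          exact absurd hHb (not_le.mpr this)
      · intro hle
        rcases eq_or_lt_of_le hle with rfl | hlt
        · exact hbs0.ge
        · have := hanti ⟨hb, hlt.trans hbsIoo.2⟩ hbsIoo hlt
          rw [hbs0] at this
          exact this.le
  · -- case (iii)
    intro h0 b hb
    rcases le_or_gt bbar b with hbb | hbb
    · exact (hHneg b hbb).le
    · have hs := hsplit 0 b le_rfl hb.le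
      have hn := hIoc_neg 0 b le_rfl hb hbb.le
      have : H b ≤ H 0 := by
        simp only [hH_def]
        rw [hs]
        nlinarith
      exact this.trans h0
end

section
/- Let $\psi(\theta) = c\theta + \int_{(-\infty,0)}(e^{\theta z} - 1)\Pi(dz)$ for $\theta \ge 0$, where $c > 0$ and $\Pi$ is a finite measure on $(-\infty,0)$, and let $\Phi(s)$ be the unique positive root of $\psi(\lambda) = s$ for $s > 0$. Then for fixed $q > 0$, $\Phi(q+r) - \frac{r}{c} \to \frac{q + \Pi(-\infty,0)}{c}$ as $r \to \infty$. -/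
open Set MeasureTheory Filter

theorem stmt_13 (c q : ℝ) (hc : 0 < c) (hq : 0 < q)
    (Pi0 : Measure ℝ) [IsFiniteMeasure Pi0] (hsupp : Pi0 (Ici 0) = 0)
    (ψ : ℝ → ℝ)
    (hψ : ∀ θ : ℝ, 0 ≤ θ → ψ θ = c * θ + ∫ z, (Real.exp (θ * z) - 1) ∂Pi0)
    (Φ : ℝ → ℝ)
    (hΦ : ∀ s > (0:ℝ), 0 < Φ s ∧ ψ (Φ s) = s ∧ ∀ l > (0:ℝ), ψ l = s → l = Φ s) :
    Tendsto (fun r : ℝ => Φ (q + r) - r / c) atTop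
      (nhds ((q + (Pi0 (Iio 0)).toReal) / c)) := by
  have hae : ∀ᵐ z ∂Pi0, z < 0 := by
    rw [ae_iff]
    convert hsupp using 2
    ext z; simp [not_lt]
  -- integrability of the integrand
  have hmeas : ∀ t : ℝ, AEStronglyMeasurable (fun z => Real.exp (t * z) - 1) Pi0 := by
    intro t
    exact ((Real.continuous_exp.comp (continuous_const.mul continuous_id)).sub
      continuous_const).aestronglyMeasurable
  have hint : ∀ t : ℝ, 0 ≤ t → Integrable (fun z => Real.exp (t * z) - 1) Pi0 := by
    intro t ht
    refine Integrable.mono' (integrable_const (1:ℝ)) (hmeas t) ?_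
    filter_upwards [hae] with z hz
    have h1 : Real.exp (t * z) ≤ 1 := by
      rw [show (1:ℝ) = Real.exp 0 by simp]
      exact Real.exp_le_exp.mpr (mul_nonpos_of_nonneg_of_nonpos ht hz.le)
    have h0 : 0 < Real.exp (t * z) := Real.exp_pos _
    rw [Real.norm_eq_abs, abs_le]
    constructor <;> linarith
  set F : ℝ → ℝ := fun t => ∫ z, (1 - Real.exp (t * z)) ∂Pi0 with hF
  -- F t = - ∫ (exp(t z) - 1)
  have hFneg : ∀ t : ℝ, F t = - ∫ z, (Real.exp (t * z) - 1) ∂Pi0 := by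
    intro t
    rw [hF, ← integral_neg]
    simp only [neg_sub]
  -- limit of F at top
  have hμ : (Pi0 (Iio 0)).toReal = ∫ _z, (1:ℝ) ∂Pi0 := by
    rw [integral_const, smul_eq_mul, mul_one]
    congr 1
    have h2 : Pi0 univ = Pi0 (Iio 0) + Pi0 (Ici 0) := by
      rw [← measure_union (Iio_disjoint_Ici le_rfl) measurableSet_Ici, Iio_union_Ici]
    rw [h2, hsupp, add_zero]
  have hFlim : Tendsto F atTop (nhds ((Pi0 (Iio 0)).toReal)) := by
    rw [hμ]
    refine tendsto_integral_filter_of_dominated_convergence (fun _ => (1:ℝ))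
      ?_ ?_ (integrable_const 1) ?_
    · filter_upwards with t
      exact (continuous_const.sub
        (Real.continuous_exp.comp (continuous_const.mul continuous_id))).aestronglyMeasurable
    · filter_upwards [eventually_ge_atTop (0:ℝ)] with t ht
      filter_upwards [hae] with z hz
      have h1 : Real.exp (t * z) ≤ 1 := by
        rw [show (1:ℝ) = Real.exp 0 by simp]
        exact Real.exp_le_exp.mpr (mul_nonpos_of_nonneg_of_nonpos ht hz.le)
      have h0 : 0 < Real.exp (t * z) := Real.exp_pos _
      rw [Real.norm_eq_abs, abs_le]
      constructor <;> linarith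
    · filter_upwards [hae] with z hz
      have hexp : Tendsto (fun t : ℝ => Real.exp (t * z)) atTop (nhds 0) := by
        apply Real.tendsto_exp_atBot.comp
        exact Tendsto.atTop_mul_const_of_neg hz tendsto_id
      have := (tendsto_const_nhds (x := (1:ℝ)) (f := atTop)).sub hexp
      simpa using this
  -- Φ (q + r) tends to atTop
  have hkey : ∀ r : ℝ, 0 ≤ r → c * Φ (q + r) - F (Φ (q + r)) = q + r := by
    intro r hr
    have hqr : 0 < q + r := by linarith
    obtain ⟨hpos, heq, _⟩ := hΦ (q + r) hqr
    rw [hψ _ hpos.le] at heq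
    rw [hFneg]
    linarith
  have hFnonneg : ∀ t : ℝ, 0 ≤ t → 0 ≤ F t := by
    intro t ht
    rw [hFneg]
    simp only [Left.nonneg_neg_iff]
    apply integral_nonpos_of_ae
    filter_upwards [hae] with z hz
    have h1 : Real.exp (t * z) ≤ 1 := by
      rw [show (1:ℝ) = Real.exp 0 by simp]
      exact Real.exp_le_exp.mpr (mul_nonpos_of_nonneg_of_nonpos ht hz.le)
    simp only [Pi.zero_apply]
    linarith
  have hΦtop : Tendsto (fun r : ℝ => Φ (q + r)) atTop atTop := by
    have hdiv : Tendsto (fun r : ℝ => (q + r) / c) atTop atTop :=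
      (tendsto_atTop_add_const_left atTop q tendsto_id).atTop_div_const hc
    refine tendsto_atTop_mono' atTop ?_ hdiv
    filter_upwards [eventually_ge_atTop (0:ℝ)] with r hr
    have hkey' := hkey r hr
    have hFpos := hFnonneg (Φ (q + r)) (hΦ (q + r) (by linarith)).1.le
    rw [div_le_iff₀ hc]
    linarith [hkey']
  -- combine
  have hmain : Tendsto (fun r : ℝ => (q + F (Φ (q + r))) / c) atTop
      (nhds ((q + (Pi0 (Iio 0)).toReal) / c)) :=
    ((tendsto_const_nhds.add (hFlim.comp hΦtop)).div_const c)
  refine hmain.congr' ?_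
  filter_upwards [eventually_ge_atTop (0:ℝ)] with r hr
  have hkey' := hkey r hr
  field_simp
  linarith
end
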